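/- Let G = (Ξ, Σ, Δ) be a grammar in 2-normal form, b = w_1* … w_d* a bounded expression over Σ, b̃ = a_1* … a_d* over A = {a_1, …, a_d} disjoint from Σ, and G^∩, G^⋈ as defined. Then for all X ∈ Ξ and 1 ≤ s ≤ x ≤ d: L_{[q^{(s)}_1 X q^{(x)}_1]}(G^⋈) ⊆ b̃, i.e., every word of this language is of the form a_1^{i_1} ⋯ a_d^{i_d}. -/

import Mathlib

namespace Paper

/-- A word over nonterminals `N` and terminals `T`. -/
abbrev Word (N T : Type) := List (N ⊕ T)

/-- A production of a grammar. -/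
abbrev CProd (N T : Type) := N × Word N T

/-- A grammar, given by its set of productions. -/
structure CFG (N T : Type) where
  prods : Set (CProd N T)

variable {N T : Type}

/-- number of occurrences of nonterminals in a word -/
def ntCount (u : Word N T) : ℕ := (u.filter (fun s => s.isLeft)).length

/-- number of occurrences of terminals in a word -/
def tCount (u : Word N T) : ℕ := (u.filter (fun s => s.isRight)).length

/-- the result of applying production `p` at position `j` of `u` -/
def applyProd (p : CProd N T) (j : ℕ) (u : Word N T) : Word N T :=
  u.take j ++ p.2 ++ u.drop (j + 1)

/-- `KSeq G k u γjs v`: a step sequence from `u` to `v` applying the indicated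
productions at the indicated positions, in which every word (including `u`, `v`)
has at most `k` occurrences of nonterminals (`k = ⊤` places no restriction). -/
inductive KSeq (G : CFG N T) (k : ℕ∞) : Word N T → List (CProd N T × ℕ) → Word N T → Prop
  | refl (u : Word N T) : (ntCount u : ℕ∞) ≤ k → KSeq G k u [] u
  | step {u v : Word N T} {p : CProd N T} {j : ℕ} {rest : List (CProd N T × ℕ)} :
      (ntCount u : ℕ∞) ≤ k → p ∈ G.prods → u[j]? = some (Sum.inl p.1) →
      KSeq G k (applyProd p j u) rest v → KSeq G k u ((p, j) :: rest) v

/-- words annotated with the index of the step at which each symbol occurrence appeared -/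
abbrev AWord (N T : Type) := List ((N ⊕ T) × ℕ)

def strip (u : AWord N T) : Word N T := u.map Prod.fst

def ntCountA (u : AWord N T) : ℕ := (u.filter (fun s => s.1.isLeft)).length

def applyProdA (p : CProd N T) (j m : ℕ) (u : AWord N T) : AWord N T :=
  u.take j ++ p.2.map (fun s => (s, m)) ++ u.drop (j + 1)

/-- the depth-first condition: position `j` carries a maximal first-appearance
index among the nonterminal occurrences of `u` -/
def dfOK (u : AWord N T) (j : ℕ) : Prop :=
  ∀ i x o, u[(i : ℕ)]? = some (Sum.inl x, o) → ∀ s oj, u[j]? = some (s, oj) → o ≤ oj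

/-- `DFSeq G k m u γjs v`: a `k`-index depth-first step sequence on annotated words,
where `m` is the index (in the whole sequence) of the current word `u`. -/
inductive DFSeq (G : CFG N T) (k : ℕ∞) : ℕ → AWord N T → List (CProd N T × ℕ) → AWord N T → Prop
  | refl (m : ℕ) (u : AWord N T) : (ntCountA u : ℕ∞) ≤ k → DFSeq G k m u [] u
  | step {m : ℕ} {u v : AWord N T} {p : CProd N T} {j o : ℕ} {rest : List (CProd N T × ℕ)} :
      (ntCountA u : ℕ∞) ≤ k → p ∈ G.prods → u[j]? = some (Sum.inl p.1, o) →
      dfOK u j →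
      DFSeq G k (m + 1) (applyProdA p j (m + 1) u) rest v →
      DFSeq G k m u ((p, j) :: rest) v

/-- `u ⇒^γ v` by a `k`-index step sequence (positions existentially quantified). -/
def CtrlSeq (G : CFG N T) (k : ℕ∞) (u : Word N T) (γ : List (CProd N T)) (v : Word N T) : Prop :=
  ∃ js : List ℕ, js.length = γ.length ∧ KSeq G k u (γ.zip js) v

/-- annotate a word as an initial word of a step sequence -/
def annot (u : Word N T) : AWord N T := u.map (fun s => (s, 0))

/-- `u ⇒^γ v` by a `k`-index depth-first step sequence starting at `u`. -/
def DFCtrlFrom (G : CFG N T) (k : ℕ∞) (u : Word N T) (γ : List (CProd N T)) (v : Word N T) :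
    Prop :=
  ∃ (js : List ℕ) (va : AWord N T),
    js.length = γ.length ∧ DFSeq G k 0 (annot u) (γ.zip js) va ∧ strip va = v

/-- embedding of terminal words -/
def tw (w : List T) : Word N T := w.map Sum.inr

/-- the sentential word `u Y v` where `u, v` are terminal and `Y` is an optional nonterminal -/
def sent (u : List T) (Y : Option N) (v : List T) : Word N T :=
  tw u ++ (Y.elim [] (fun y => [Sum.inl y])) ++ tw v

/-- `L^{(k)}_{X,Y}(G) = { u·v | X ⇒* u Y v by a k-index step sequence }`;
`Y = none` stands for `ε`. -/
def LKY (G : CFG N T) (k : ℕ∞) (X : N) (Y : Option N) : Set (List T) :=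
  {w | ∃ u v γ, w = u ++ v ∧ CtrlSeq G k [Sum.inl X] γ (sent u Y v)}

/-- `L_X(G)` -/
def Lang (G : CFG N T) (X : N) : Set (List T) := LKY G ⊤ X none

/-- `L^{(k)}_X(G)` -/
def LangK (G : CFG N T) (k : ℕ) (X : N) : Set (List T) := LKY G (k : ℕ∞) X none

/-- `Γ^{df(k)}_{X,Y}(G)`: control words of `k`-index depth-first step sequences `X ⇒^γ u Y v`. -/
def GammaDF (G : CFG N T) (k : ℕ) (X : N) (Y : Option N) : Set (List (CProd N T)) :=
  {γ | ∃ u v : List T, DFCtrlFrom G (k : ℕ∞) [Sum.inl X] γ (sent u Y v)}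

/-- `L̂_{X,Y}(Γ, G)` -/
def LHat (G : CFG N T) (Γ : Set (List (CProd N T))) (X : N) (Y : Option N) : Set (List T) :=
  {w | ∃ u v, w = u ++ v ∧ ∃ γ ∈ Γ, CtrlSeq G ⊤ [Sum.inl X] γ (sent u Y v)}

/-- the language of the bounded expression `w₁* ⋯ w_d*` -/
def BLang {α : Type} : List (List α) → Set (List α)
  | [] => {[]}
  | w :: ws => {u | ∃ (n : ℕ) (v : List α), v ∈ BLang ws ∧ u = (List.replicate n w).flatten ++ v}

/-- the words of a bounded expression must be nonempty -/
def IsBExpr {α : Type} (ws : List (List α)) : Prop := ∀ w ∈ ws, w ≠ []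

/-- the language of the letter-bounded expression `a₁* ⋯ a_d*` -/
def letterLang {α : Type} (as : List α) : Set (List α) := BLang (as.map (fun a => [a]))

/-- the language `a_i* ⋯ a_j*` (0-indexed segment of `as` from `i` to `j` inclusive) -/
def segLang {α : Type} (as : List α) (i j : ℕ) : Set (List α) :=
  letterLang ((as.drop i).take (j - i + 1))

end Paper

namespace Paper

variable {N T : Type}

/-- ranked words over the nonterminals -/
abbrev RW (N : Type) := List (N × ℕ)

/-- the set of rank values is downward closed (equivalently, of the form `{0, …, m}`
when nonempty) -/
def contiguousRanks (q : RW N) : Prop := ∀ p ∈ q, ∀ j ≤ p.2, ∃ x : N, (x, j) ∈ q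

/-- vertices of the graph `A^{df(k)}_G` -/
def IsVertex (k : ℕ) (q : RW N) : Prop :=
  q.length ≤ k ∧ contiguousRanks q ∧ List.Pairwise (· ≤ ·) (q.map Prod.snd)

/-- `w↓Ξ` : projection of a word to its nonterminals -/
def ntProj (w : Word N T) : List N := w.filterMap Sum.getLeft?

open Classical in
/-- the rank given to the nonterminals produced by a step rewriting a nonterminal
of maximal rank `i`, where `uv` is the rest of the ranked word -/
noncomputable def newRank (uv : RW N) (i : ℕ) : ℕ :=
  if uv = [] then 0 else if ∀ p ∈ uv, p.2 ≠ i then i else i + 1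

/-- the edge relation of the graph `A^{df(k)}_G` -/
def Edge (G : CFG N T) (k : ℕ) (q : RW N) (p : CProd N T) (q' : RW N) : Prop :=
  p ∈ G.prods ∧ IsVertex k q ∧ IsVertex k q' ∧
  ∃ (u v : RW N) (i : ℕ), q = u ++ [(p.1, i)] ++ v ∧ (∀ x ∈ q, x.2 ≤ i) ∧
    q' = u ++ v ++ (ntProj p.2).map (fun X => (X, newRank (u ++ v) i))

/-- paths in a labeled graph, recording the sequence of edge labels -/
inductive GPath {V E : Type} (edge : V → E → V → Prop) : V → List E → V → Prop
  | refl (v : V) : GPath edge v [] v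
  | step {v v' v'' : V} {e : E} {es : List E} :
      edge v e v' → GPath edge v' es v'' → GPath edge v (e :: es) v''

/-- paths recording the successive vertices as well -/
inductive VPath {V E : Type} (edge : V → E → V → Prop) : V → List (E × V) → Prop
  | refl (v : V) : VPath edge v []
  | step {v v' : V} {e : E} {rest : List (E × V)} :
      edge v e v' → VPath edge v' rest → VPath edge v ((e, v') :: rest)

/-- endpoint of a path starting at `q` -/
def pend {V E : Type} (q : V) (π : List (E × V)) : V := (π.map Prod.snd).getLastD q

/-- a path is acyclic iff it visits no vertex twice -/
def AcyclicFrom {V E : Type} (q : V) (π : List (E × V)) : Prop :=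
  (q :: π.map Prod.snd).Nodup

/-- `Decomp edge q pairs fin` asserts that the path obtained by concatenating, in order,
the segments of `pairs` (each an acyclic segment followed by a cycle) and `fin` is a valid
path from `q`, alternating acyclic segments `ς_j` and cycles `θ_j`. -/
def Decomp {V E : Type} (edge : V → E → V → Prop) :
    V → List (List (E × V) × List (E × V)) → List (E × V) → Prop
  | q, [], fin => VPath edge q fin ∧ AcyclicFrom q fin
  | q, (σ, θ) :: rest, fin =>
      VPath edge q σ ∧ AcyclicFrom q σ ∧
      VPath edge (pend q σ) θ ∧ pend (pend q σ) θ = pend q σ ∧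
      Decomp edge (pend q σ) rest fin

/-- `|γ|_a`: total number of occurrences of the terminal `a` in the right-hand
sides of the productions of the control word `γ` -/
def projCnt {A : Type} [DecidableEq A] (γ : List (CProd N A)) (a : A) : ℕ :=
  ((γ.map (fun p => p.2)).flatten.filterMap Sum.getRight?).count a

/-- `proj(γ) = a₁^{|γ|_{a₁}} ⋯ a_s^{|γ|_{a_s}}` -/
def projW {A : Type} [DecidableEq A] (as : List A) (γ : List (CProd N A)) : List A :=
  (as.map (fun a => List.replicate (projCnt γ a) a)).flatten

end Paper

namespace Paper

variable {N T : Type}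

/-- a grammar is in 2-normal form -/
def TwoNF (G : CFG N T) : Prop := ∀ p ∈ G.prods, p.2.length ≤ 2

/-- states of the automaton/grammar `G^b`: `(s, i)` encodes `q^{(s+1)}_{i+1}`,
i.e. position `i` (0-indexed) inside the block `s` (0-indexed) -/
abbrev QB : Type := ℕ × ℕ

/-- `ℓ_s`: length of the `s`-th word of the bounded expression -/
def lenB (ws : List (List T)) (s : ℕ) : ℕ := (ws.getD s []).length

/-- the `i`-th letter of the `s`-th word -/
def letterB (ws : List (List T)) (s i : ℕ) : Option T := (ws.getD s [])[i]?

/-- the productions of the grammar `G^b` generating the bounded expression `b` -/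
def DeltaB (ws : List (List T)) : Set (CProd QB T) :=
  {p | (∃ s i a, s < ws.length ∧ i + 1 < lenB ws s ∧ letterB ws s i = some a ∧
          p = ((s, i), [Sum.inr a, Sum.inl (s, i + 1)]))
     ∨ (∃ s s' a, s ≤ s' ∧ s' < ws.length ∧
          letterB ws s (lenB ws s - 1) = some a ∧
          p = ((s, lenB ws s - 1), [Sum.inr a, Sum.inl (s', 0)]))
     ∨ (∃ s, s < ws.length ∧ p = ((s, 0), ([] : Word QB T)))}

/-- the grammar `G^b` -/
def GB (ws : List (List T)) : CFG QB T := ⟨DeltaB ws⟩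

/-- nonterminals `[q X q']` of the product grammar `G^∩` -/
abbrev NI (N : Type) : Type := QB × N × QB

/-- `q ∈ Ξ^b` -/
def ValidQ (ws : List (List T)) (q : QB) : Prop :=
  q.1 < ws.length ∧ q.2 < lenB ws q.1

/-- `[q X q'] ∈ Ξ^∩`: both states valid and blocks in order -/
def ValidNI (ws : List (List T)) (n : NI N) : Prop :=
  ValidQ ws n.1 ∧ ValidQ ws n.2.2 ∧ n.1.1 ≤ n.2.2.1

/-- `q ⇒* w·q'` in `G^b` -/
def DerB (ws : List (List T)) (q : QB) (w : List T) (q' : QB) : Prop :=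
  ∃ γ, CtrlSeq (GB ws) ⊤ [Sum.inl q] γ (tw w ++ [Sum.inl q'])

/-- the productions `Δ^∩` of the product grammar `G^∩` -/
def DeltaI (G : CFG N T) (ws : List (List T)) : Set (CProd (NI N) T) :=
  {pp | ∃ (q q' : QB) (X : N), ValidNI ws (q, X, q') ∧
     ((∃ w : List T, (X, tw w) ∈ G.prods ∧ DerB ws q w q' ∧
         pp = ((q, X, q'), tw w)) ∨
      (∃ Y : N, (X, [Sum.inl Y]) ∈ G.prods ∧
         pp = ((q, X, q'), [Sum.inl ((q, Y, q') : NI N)])) ∨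
      (∃ (a : T) (Y : N) (qm : QB), (X, [Sum.inr a, Sum.inl Y]) ∈ G.prods ∧
         ((q, [Sum.inr a, Sum.inl qm]) : CProd QB T) ∈ DeltaB ws ∧ ValidNI ws (qm, Y, q') ∧
         pp = ((q, X, q'), [Sum.inr a, Sum.inl ((qm, Y, q') : NI N)])) ∨
      (∃ (a : T) (Y : N) (qm : QB), (X, [Sum.inl Y, Sum.inr a]) ∈ G.prods ∧
         ((qm, [Sum.inr a, Sum.inl q']) : CProd QB T) ∈ DeltaB ws ∧ ValidNI ws (q, Y, qm) ∧
         pp = ((q, X, q'), [Sum.inl ((q, Y, qm) : NI N), Sum.inr a])) ∨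
      (∃ (Y Z : N) (qm : QB), (X, [Sum.inl Y, Sum.inl Z]) ∈ G.prods ∧
         ValidNI ws (q, Y, qm) ∧ ValidNI ws (qm, Z, q') ∧
         pp = ((q, X, q'), [Sum.inl ((q, Y, qm) : NI N), Sum.inl ((qm, Z, q') : NI N)])))}

/-- the product grammar `G^∩` -/
def GI (G : CFG N T) (ws : List (List T)) : CFG (NI N) T := ⟨DeltaI G ws⟩

/-- `ζ` on symbols -/
def zetaS : (NI N ⊕ T) → (N ⊕ T) := Sum.map (fun n => n.2.1) id

/-- `ζ` on productions -/
def zetaP (p : CProd (NI N) T) : CProd N T := (p.1.2.1, p.2.map zetaS)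

/-- `ζ` on control words -/
def zetaC (γ : List (CProd (NI N) T)) : List (CProd N T) := γ.map zetaP

/-- the intermediate state of the (unique, shortest) two-step run of `G^b` from the
left state of `h` to its right state; when the first step wraps, the least possible
intermediate block is chosen -/
noncomputable def iotaMid (ws : List (List T)) (h : NI N) (a b : T) : QB :=
  if h.1.2 + 1 < lenB ws h.1.1 then (h.1.1, h.1.2 + 1)
  else (sInf {y : ℕ | (((h.1.1, h.1.2), [Sum.inr a, Sum.inl ((y, 0) : QB)]) : CProd QB T) ∈ DeltaB ws ∧
                (((y, 0), [Sum.inr b, Sum.inl (h.2.2 : QB)]) : CProd QB T) ∈ DeltaB ws}, 0)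

/-- `ι` on right-hand sides: relabels terminals by the indices (0-indexed) of the
blocks of `b` completed by the corresponding moves of `G^b`; `h` is the head of the
production -/
noncomputable def iotaRhs (ws : List (List T)) (h : NI N) :
    Word (NI N) T → Word (NI N) ℕ
  | [] => []
  | [Sum.inr _] => if h.2.2.2 = 0 then [Sum.inr h.1.1] else []
  | [Sum.inr a, Sum.inr b] =>
      (if (iotaMid ws h a b).2 = 0 then [Sum.inr h.1.1] else []) ++
      (if h.2.2.2 = 0 then [Sum.inr (iotaMid ws h a b).1] else [])
  | [Sum.inr _, Sum.inl m] => (if m.1.2 = 0 then [Sum.inr h.1.1] else []) ++ [Sum.inl m]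
  | [Sum.inl m, Sum.inr _] => [Sum.inl m] ++ (if h.2.2.2 = 0 then [Sum.inr m.2.2.1] else [])
  | other => other.map (Sum.map id (fun _ => 0))

/-- the map `ι : Δ^∩ → Δ^⋈` -/
noncomputable def iota (ws : List (List T)) (p : CProd (NI N) T) : CProd (NI N) ℕ :=
  (p.1, iotaRhs ws p.1 p.2)

/-- the grammar `G^⋈`, whose terminals are the (0-indexed) letters `a₁, …, a_d`
represented by natural numbers -/
noncomputable def GBow (G : CFG N T) (ws : List (List T)) : CFG (NI N) ℕ :=
  ⟨iota ws '' DeltaI G ws⟩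

end Paper

namespace Paper

variable {N A : Type}

/-- `Ξ̂`: nonterminals producing some word starting with `a₁` and some word ending
with `a_d` -/
def XiHat (G : CFG N A) (a1 ad : A) : Set N :=
  {Y | (∃ w ∈ Lang G Y, ∃ v, w = a1 :: v) ∧ (∃ w ∈ Lang G Y, ∃ v, w = v ++ [ad])}

/-- the grammar `G^♯` (here `S = Ξ̂`, and `Ξ̌` is its complement) -/
def GSharp (G : CFG N A) (S : Set N) : CFG N A :=
  ⟨{p | p ∈ G.prods ∧ p.1 ∉ S} ∪
   {p | p ∈ G.prods ∧ p.1 ∈ S ∧ ∃ (u : Word N A) (Xr : N) (v : Word N A),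
      Xr ∈ S ∧ p.2 = u ++ [Sum.inl Xr] ++ v}⟩

/-- the grammar `G_{i,w}` for a pivot production `piv` (here `S = Ξ̂`) -/
def GPivot (G : CFG N A) (S : Set N) (piv : CProd N A) : CFG N A :=
  ⟨{p | p ∈ G.prods ∧ p.1 ∉ S} ∪ {piv}⟩

/-- `G` is reduced for `X` -/
def Reduced (G : CFG N A) (X : N) : Prop :=
  ∀ Y : N, Y ≠ X → (LKY G ⊤ X (some Y)).Nonempty ∧ (Lang G Y).Nonempty

/-- `a₁* ⋯ a_d*` (given by the list `as`) is the minimal strict letter-bounded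
expression for `L_X(G)` -/
def MinimalLB (G : CFG N A) (X : N) (as : List A) : Prop :=
  Lang G X ⊆ letterLang as ∧ ∀ i < as.length, ¬ (Lang G X ⊆ letterLang (as.eraseIdx i))

/-- a symbol of `A ∪ {ε}` as a word -/
def optT (a : Option A) : Word N A := a.elim [] (fun x => [Sum.inr x])

/-- a symbol of `Ξ ∪ {ε}` as a word -/
def optN (y : Option N) : Word N A := y.elim [] (fun x => [Sum.inl x])

/-- `y ⇒^γ u_y` is a (possibly empty) `k`-index depth-first derivation, where
`y ∈ Ξ ∪ {ε}`; for `y = ε` the derivation is empty -/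
def optDFDer (H : CFG N A) (k : ℕ) (y : Option N) (γ : List (CProd N A)) : Prop :=
  match y with
  | some Y => ∃ w : List A, DFCtrlFrom H (k : ℕ∞) [Sum.inl Y] γ (tw w)
  | none => γ = []

/-- the grammar `G_k` with productions `X_i → X_{i-1} X_{i-1}` (1 ≤ i ≤ k) and `X_0 → a` -/
def Gk (k : ℕ) : CFG ℕ Unit :=
  ⟨{p | (∃ i, 1 ≤ i ∧ i ≤ k ∧ p = (i, [Sum.inl (i - 1), Sum.inl (i - 1)])) ∨
        p = (0, [Sum.inr ()])}⟩

end Paper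
namespace Paper

variable {N T : Type}

/-- lower bound (block index) of a symbol of `G^⋈` -/
def loS : (NI N ⊕ ℕ) → ℕ
  | Sum.inl n => n.1.1
  | Sum.inr a => a

/-- upper bound (block index) of a symbol of `G^⋈` -/
def hiS : (NI N ⊕ ℕ) → ℕ
  | Sum.inl n => n.2.2.1
  | Sum.inr a => a

/-- pointwise soundness of a symbol -/
def PSym (ws : List (List T)) : (NI N ⊕ ℕ) → Prop
  | Sum.inl n => ValidNI ws n
  | Sum.inr a => a < ws.length

/-- invariant on sentential forms of `G^⋈` -/
def Good (ws : List (List T)) (u : Word (NI N) ℕ) : Prop :=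
  u.Pairwise (fun a b => hiS a ≤ loS b) ∧ ∀ z ∈ u, PSym ws z ∧ loS z ≤ hiS z

lemma deltaB_facts {ws : List (List T)} {q qm : QB} {a : T}
    (h : ((q, [Sum.inr a, Sum.inl qm]) : CProd QB T) ∈ DeltaB ws) :
    q.1 ≤ qm.1 ∧ q.1 < ws.length ∧ qm.1 < ws.length := by
  rcases h with ⟨s, i, a', hs, hi, ha, heq⟩ | ⟨s, s', a', hss', hs', ha, heq⟩ | ⟨s, hs, heq⟩
  · injection heq with h1 h2
    subst h1
    simp only [List.cons.injEq, Sum.inl.injEq, and_true] at h2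
    rw [h2.2]
    exact ⟨le_refl _, hs, hs⟩
  · injection heq with h1 h2
    subst h1
    simp only [List.cons.injEq, Sum.inl.injEq, and_true] at h2
    rw [h2.2]
    exact ⟨hss', lt_of_le_of_lt hss' hs', hs'⟩
  · injection heq with h1 h2
    simp at h2

lemma deltaB_shape {ws : List (List T)} {p : CProd QB T} (hp : p ∈ DeltaB ws) :
    (∃ a qm, p.2 = [Sum.inr a, Sum.inl qm]) ∨ p.2 = [] := by
  rcases hp with ⟨s, i, a, _, _, _, heq⟩ | ⟨s, s', a, _, _, _, heq⟩ | ⟨s, _, heq⟩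
  · exact Or.inl ⟨a, (s, i + 1), by rw [heq]⟩
  · exact Or.inl ⟨a, (s', 0), by rw [heq]⟩
  · exact Or.inr (by rw [heq])

/-- single-step runs of the automaton `G^b` -/
inductive RunB (ws : List (List T)) : QB → List T → QB → Prop
  | nil (q : QB) : RunB ws q [] q
  | cons {q qm q' : QB} {a : T} {t : List T} :
      (((q, [Sum.inr a, Sum.inl qm]) : CProd QB T) ∈ DeltaB ws) →
      RunB ws qm t q' → RunB ws q (a :: t) q'

lemma tw_snoc_inj {u t : List T} {q q' : QB}
    (h : (tw u ++ [Sum.inl q] : Word QB T) = tw t ++ [Sum.inl q']) : u = t ∧ q = q' := by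
  have hlen : (tw u : Word QB T).length = (tw t : Word QB T).length := by
    have := congrArg List.length h
    simp only [List.length_append, List.length_cons, List.length_nil] at this
    omega
  obtain ⟨h1, h2⟩ := List.append_inj h hlen
  constructor
  · have : Function.Injective (Sum.inr : T → QB ⊕ T) := fun a b => by simp
    exact List.map_injective_iff.mpr this h1
  · simpa using h2

lemma kseq_no_nt {G : CFG N T} {k : ℕ∞} {u v : Word N T} {l : List (CProd N T × ℕ)}
    (h : KSeq G k u l v) (hu : ∀ z ∈ u, z.isRight = true) : v = u := by
  cases h with
  | refl => rfl
  | step hcnt hp hget hrest =>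
    have := hu _ (List.mem_of_getElem? hget)
    simp at this

lemma runB_of_kseq {ws : List (List T)} {w0 v : Word QB T} {l : List (CProd QB T × ℕ)}
    (h : KSeq (GB ws) ⊤ w0 l v) :
    ∀ (u : List T) (q : QB) (t : List T) (q' : QB),
      w0 = tw u ++ [Sum.inl q] → v = tw t ++ [Sum.inl q'] →
      ∃ t2, t = u ++ t2 ∧ RunB ws q t2 q' := by
  induction h with
  | refl w hk =>
    intro u q t q' h1 h2
    obtain ⟨rfl, rfl⟩ := tw_snoc_inj (h1 ▸ h2)
    exact ⟨[], by simp, RunB.nil q⟩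
  | @step u0 v0 p j rest hcnt hp hget hrest ih =>
    intro u q t q' h1 h2
    subst h1
    have hlen : (tw u : Word QB T).length = u.length := List.length_map _
    have hj : j = u.length := by
      rcases Nat.lt_trichotomy j u.length with hlt | heq | hgt
      · rw [List.getElem?_append_left (by rw [hlen]; exact hlt)] at hget
        have := List.mem_of_getElem? hget
        simp [tw] at this
      · exact heq
      · rw [List.getElem?_append_right (by omega)] at hget
        rw [List.getElem?_eq_none (by simp; omega)] at hget
        exact absurd hget (by simp)
    subst hj
    rw [List.getElem?_append_right (by omega)] at hget
    rw [hlen, Nat.sub_self] at hget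
    have hp1 : p.1 = q := by
      simp only [List.getElem?_cons_zero] at hget
      injection hget with hget
      injection hget with hget
      exact hget.symm
    have htake : (tw u ++ [Sum.inl q] : Word QB T).take u.length = tw u :=
      List.take_left' hlen
    have hdrop : (tw u ++ [Sum.inl q] : Word QB T).drop (u.length + 1) = [] := by
      apply List.drop_eq_nil_of_le
      simp [hlen]
    rcases deltaB_shape hp with ⟨a, qm, hp2⟩ | hp2
    · have happ : applyProd p u.length (tw u ++ [Sum.inl q])
          = tw (u ++ [a]) ++ [Sum.inl qm] := by
        unfold applyProd
        rw [htake, hdrop, hp2]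
        simp [tw]
      rw [happ] at hrest ih
      obtain ⟨t2, ht2, hrun⟩ := ih (u ++ [a]) qm t q' rfl h2
      refine ⟨a :: t2, by simp [ht2], RunB.cons ?_ hrun⟩
      have : p = (q, [Sum.inr a, Sum.inl qm]) := by
        rw [← hp1, ← hp2]
      exact this ▸ hp
    · have happ : applyProd p u.length (tw u ++ [Sum.inl q]) = tw u := by
        unfold applyProd
        rw [htake, hdrop, hp2]
        simp
      rw [happ] at hrest
      have hv := kseq_no_nt hrest (by intro z hz; rcases List.mem_map.mp hz with ⟨b, _, rfl⟩; rfl)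
      rw [h2] at hv
      have : (Sum.inl q' : QB ⊕ T) ∈ tw u := by
        rw [← hv]; simp
      rcases List.mem_map.mp this with ⟨b, _, hb⟩
      simp at hb

lemma derB_two {ws : List (List T)} {q q' : QB} {a b : T}
    (h : DerB ws q [a, b] q') :
    ∃ qm, (((q, [Sum.inr a, Sum.inl qm]) : CProd QB T) ∈ DeltaB ws) ∧
      (((qm, [Sum.inr b, Sum.inl q']) : CProd QB T) ∈ DeltaB ws) := by
  obtain ⟨γ, js, hlen, hks⟩ := h
  obtain ⟨t2, ht2, hrun⟩ := runB_of_kseq hks [] q [a, b] q' (by simp [tw]) rfl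
  simp at ht2
  subst ht2
  cases hrun with
  | cons m1 h1 =>
    cases h1 with
    | cons m2 h2 =>
      cases h2 with
      | nil => exact ⟨_, m1, m2⟩

lemma good_replace {ws : List (List T)} {u : Word (NI N) ℕ} {j : ℕ} {m : NI N ⊕ ℕ}
    {z : Word (NI N) ℕ} (hg : Good ws u) (hget : u[j]? = some m)
    (hzp : z.Pairwise (fun a b => hiS a ≤ loS b))
    (hzs : ∀ c ∈ z, PSym ws c ∧ loS c ≤ hiS c ∧ loS m ≤ loS c ∧ hiS c ≤ hiS m) :
    Good ws (u.take j ++ z ++ u.drop (j + 1)) := by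
  obtain ⟨hj, hm⟩ := List.getElem?_eq_some_iff.mp hget
  have hu : u = u.take j ++ m :: u.drop (j + 1) := by
    conv_lhs => rw [← List.take_append_drop j u]
    rw [List.drop_eq_getElem_cons hj, hm]
  obtain ⟨hpw, hall⟩ := hg
  rw [hu] at hpw hall
  rw [List.pairwise_append] at hpw
  obtain ⟨hpw1, hpw2, hpw12⟩ := hpw
  rw [List.pairwise_cons] at hpw2
  obtain ⟨hm2, hpw2⟩ := hpw2
  have hm1 : ∀ c ∈ u.take j, hiS c ≤ loS m := fun c hc => hpw12 c hc m (by simp)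
  constructor
  · rw [List.append_assoc, List.pairwise_append]
    refine ⟨hpw1, ?_, ?_⟩
    · rw [List.pairwise_append]
      refine ⟨hzp, hpw2, fun c hc d hd => le_trans ((hzs c hc).2.2.2) (hm2 d hd)⟩
    · intro c hc d hd
      rcases List.mem_append.mp hd with hd | hd
      · exact le_trans (hm1 c hc) ((hzs d hd).2.2.1)
      · exact hpw12 c hc d (by simp [hd])
  · intro c hc
    rw [List.append_assoc, List.mem_append, List.mem_append] at hc
    rcases hc with hc | hc | hc
    · exact hall c (by simp [hc])
    · exact ⟨(hzs c hc).1, (hzs c hc).2.1⟩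
    · exact hall c (by simp [hc])

end Paper
namespace Paper

variable {N T : Type}

lemma iota_rhs_good {G : CFG N T} {ws : List (List T)} (h2 : TwoNF G)
    {pp : CProd (NI N) T} (hpp : pp ∈ DeltaI G ws) :
    (iotaRhs ws pp.1 pp.2).Pairwise (fun a b => hiS a ≤ loS b) ∧
    ∀ c ∈ iotaRhs ws pp.1 pp.2, PSym ws c ∧ loS c ≤ hiS c ∧
      loS (Sum.inl pp.1) ≤ loS c ∧ hiS c ≤ hiS (Sum.inl pp.1) := by
  obtain ⟨q, q', X, hval, hcase⟩ := hpp
  have hqq' : q.1 ≤ q'.1 := hval.2.2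
  have hqd : q.1 < ws.length := hval.1.1
  have hq'd : q'.1 < ws.length := hval.2.1.1
  rcases hcase with ⟨w, hw, hder, heq⟩ | ⟨Y, hY, heq⟩ | ⟨a, Y, qm, hprod, hstep, hvm, heq⟩ |
    ⟨a, Y, qm, hprod, hstep, hvm, heq⟩ | ⟨Y, Z, qm, hprod, hv1, hv2, heq⟩
  · -- terminal case
    subst heq
    simp only
    have hwlen : w.length ≤ 2 := by
      have := h2 _ hw
      simpa [tw] using this
    match w with
    | [] =>
      simp [tw, iotaRhs]
    | [a] =>
      simp only [tw, List.map_cons, List.map_nil, iotaRhs]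
      split
      · refine ⟨by simp, ?_⟩
        intro c hc
        simp only [List.mem_singleton] at hc
        subst hc
        exact ⟨hqd, le_refl _, le_refl _, hqq'⟩
      · simp
    | [a, b] =>
      simp only [tw, List.map_cons, List.map_nil, iotaRhs]
      by_cases hlt : (q, X, q').1.2 + 1 < lenB ws (q, X, q').1.1
      · have hmid : iotaMid ws ((q, X, q') : NI N) a b = (q.1, q.2 + 1) := by
          rw [iotaMid, if_pos hlt]
        rw [hmid, if_neg (by simp)]
        simp only [List.nil_append]
        split
        · refine ⟨by simp, ?_⟩
          intro c hc
          simp only [List.mem_singleton] at hc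
          subst hc
          exact ⟨hqd, le_refl _, le_refl _, hqq'⟩
        · simp
      · -- wrap case
        obtain ⟨q1, m1, m2⟩ := derB_two hder
        have hq1 : ∃ y, q1 = (y, 0) := by
          rcases m1 with ⟨s, i, a', hs, hi, ha, heq⟩ | ⟨s, s', a', hss', hs', ha, heq⟩ |
            ⟨s, hs, heq⟩
          · exfalso
            injection heq with e1 e2
            apply hlt
            simp only at *
            rw [e1]
            simpa using hi
          · injection heq with e1 e2
            simp only [List.cons.injEq, Sum.inl.injEq, and_true] at e2
            exact ⟨s', e2.2⟩
          · injection heq with e1 e2; simp at e2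
        obtain ⟨y, rfl⟩ := hq1
        set S : Set ℕ := {y : ℕ |
          (((((q, X, q') : NI N).1.1, ((q, X, q') : NI N).1.2),
              [Sum.inr a, Sum.inl ((y, 0) : QB)]) : CProd QB T) ∈ DeltaB ws ∧
          ((((y, 0) : QB), [Sum.inr b, Sum.inl (((q, X, q') : NI N).2.2 : QB)]) : CProd QB T)
            ∈ DeltaB ws} with hS
        have hyS : y ∈ S := by
          constructor
          · simpa using m1
          · simpa using m2
        have hSinf : sInf S ∈ S := Nat.sInf_mem ⟨y, hyS⟩
        obtain ⟨m1', m2'⟩ := hSinf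
        have f1 := deltaB_facts m1'
        have f2 := deltaB_facts m2'
        simp only at f1 f2
        have hmid : iotaMid ws ((q, X, q') : NI N) a b = (sInf S, 0) := by
          rw [iotaMid, if_neg hlt, hS]
        rw [hmid, if_pos (rfl : ((sInf S, 0) : QB).2 = 0)]
        have hc1 : PSym ws (Sum.inr q.1 : NI N ⊕ ℕ) ∧
            loS (Sum.inr q.1 : NI N ⊕ ℕ) ≤ hiS (Sum.inr q.1 : NI N ⊕ ℕ) ∧
            q.1 ≤ loS (Sum.inr q.1 : NI N ⊕ ℕ) ∧ hiS (Sum.inr q.1 : NI N ⊕ ℕ) ≤ q'.1 :=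
          ⟨hqd, le_refl _, le_refl _, hqq'⟩
        split
        · constructor
          · simp only [List.singleton_append, List.pairwise_pair]
            exact f1.1
          · intro c hc
            simp only [List.singleton_append, List.mem_cons, List.mem_singleton,
              List.not_mem_nil, or_false] at hc
            rcases hc with rfl | rfl
            · exact hc1
            · exact ⟨f2.2.1, le_refl _, f1.1, f2.1⟩
        · refine ⟨by simp, ?_⟩
          intro c hc
          simp only [List.append_nil, List.mem_singleton] at hc
          exact hc ▸ hc1
  · -- chain case
    subst heq
    simp only [iotaRhs]
    refine ⟨by simp, ?_⟩
    intro c hc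
    simp only [List.map_cons, List.map_nil, List.mem_singleton] at hc
    subst hc
    exact ⟨⟨hval.1, hval.2.1, hval.2.2⟩, hqq', le_refl _, le_refl _⟩
  · -- left-linear case
    subst heq
    simp only [iotaRhs]
    have f := deltaB_facts hstep
    constructor
    · split
      · simp only [List.singleton_append, List.pairwise_pair]
        exact f.1
      · simp
    · intro c hc
      have hm : c = Sum.inl ((qm, Y, q') : NI N) ∨ c = (Sum.inr q.1 : NI N ⊕ ℕ) := by
        rcases List.mem_append.mp hc with hc | hc
        · right
          split at hc
          · simpa using hc
          · simp at hc
        · left; simpa using hc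
      rcases hm with rfl | rfl
      · exact ⟨hvm, hvm.2.2, f.1, le_refl _⟩
      · exact ⟨f.2.1, le_refl _, le_refl _, le_trans f.1 hvm.2.2⟩
  · -- right-linear case
    subst heq
    simp only [iotaRhs]
    have f := deltaB_facts hstep
    constructor
    · split
      · simp only [List.cons_append, List.nil_append, List.pairwise_pair]
        exact le_refl _
      · simp
    · intro c hc
      have hm : c = Sum.inl ((q, Y, qm) : NI N) ∨ c = (Sum.inr qm.1 : NI N ⊕ ℕ) := by
        rcases List.mem_append.mp hc with hc | hc
        · left; simpa using hc
        · right
          split at hc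
          · simpa using hc
          · simp at hc
      rcases hm with rfl | rfl
      · exact ⟨hvm, hvm.2.2, le_refl _, f.1⟩
      · exact ⟨f.2.1, le_refl _, hvm.2.2, f.1⟩
  · -- branching case
    subst heq
    simp only [iotaRhs]
    constructor
    · simp only [List.map_cons, List.map_nil, Sum.map_inl, id_eq, List.pairwise_pair]
      exact le_refl _
    · intro c hc
      simp only [List.map_cons, List.map_nil, Sum.map_inl, id_eq, List.mem_cons,
        List.mem_singleton, List.not_mem_nil, or_false] at hc
      rcases hc with rfl | rfl
      · exact ⟨hv1, hv1.2.2, le_refl _, hv2.2.2⟩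
      · exact ⟨hv2, hv2.2.2, hv1.2.2, le_refl _⟩

end Paper
namespace Paper

variable {N T : Type}

lemma ksGood {G : CFG N T} {ws : List (List T)} (h2 : TwoNF G)
    {α β : Word (NI N) ℕ} {l : List (CProd (NI N) ℕ × ℕ)}
    (h : KSeq (GBow G ws) ⊤ α l β) (hα : Good ws α) : Good ws β := by
  induction h with
  | refl => exact hα
  | step hcnt hp hget hrest ih =>
    apply ih
    obtain ⟨pp, hppmem, rfl⟩ := hp
    have h1 : (iota ws pp).1 = pp.1 := rfl
    obtain ⟨hpair, hall⟩ := iota_rhs_good h2 hppmem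
    rw [h1] at hget
    exact good_replace hα hget hpair hall

lemma join_replicate_single {α : Type} (n : ℕ) (a : α) :
    (List.replicate n [a]).flatten = List.replicate n a := by
  induction n with
  | zero => rfl
  | succ n ih => simp [List.replicate_succ, ih]

lemma mem_letterLang_of_sorted :
    ∀ (as : List ℕ), as.Pairwise (· < ·) →
      ∀ w : List ℕ, w.Pairwise (· ≤ ·) → (∀ c ∈ w, c ∈ as) → w ∈ letterLang as := by
  intro as
  induction as with
  | nil =>
    intro _ w _ hmem
    have hw : w = [] := by
      cases w with
      | nil => rfl
      | cons a t => exact absurd (hmem a (by simp)) (by simp)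
    subst hw
    exact rfl
  | cons a as ih =>
    intro hsort
    have hsort' : as.Pairwise (· < ·) := hsort.of_cons
    have hlt : ∀ b ∈ as, a < b := (List.pairwise_cons.mp hsort).1
    intro w
    induction w with
    | nil =>
      intro _ _
      exact ⟨0, [], ih hsort' [] (by simp) (by simp), by simp⟩
    | cons y w' ihw =>
      intro hws hmem
      by_cases hya : y = a
      · subst hya
        obtain ⟨n, v, hv, heq⟩ := ihw hws.of_cons (fun c hc => hmem c (by simp [hc]))
        refine ⟨n + 1, v, hv, ?_⟩
        rw [join_replicate_single] at heq ⊢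
        rw [List.replicate_succ, heq]
        simp
      · have hall : ∀ c ∈ y :: w', c ∈ as := by
          intro c hc
          rcases List.mem_cons.mp (hmem c hc) with hca | h
          · exfalso
            have hy : y ∈ as := by
              rcases List.mem_cons.mp (hmem y (by simp)) with h' | h'
              · exact absurd h' hya
              · exact h'
            have hay : a < y := hlt y hy
            rcases List.mem_cons.mp hc with h2 | h2
            · exact hya (h2 ▸ hca)
            · have := (List.pairwise_cons.mp hws).1 c h2
              omega
          · exact h
        exact ⟨0, y :: w', ih hsort' (y :: w') hws hall, by simp⟩

end Paper

namespace Paper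

/-- Fact 1: `L_{[q^{(s)}₁ X q^{(x)}₁]}(G^⋈) ⊆ b̃`, where the letters
`a₁, …, a_d` of `b̃` are represented by `0, …, d-1 : ℕ`. -/
theorem bowtie_letter_bounded {N T : Type} (G : CFG N T) (h2NF : TwoNF G)
    (ws : List (List T)) (hb : IsBExpr ws)
    (X : N) (s x : ℕ) (hsx : s ≤ x) (hx : x < ws.length) :
    Lang (GBow G ws) (((s, 0), X, (x, 0)) : NI N) ⊆ letterLang (List.range ws.length) := by

  intro w hw
  obtain ⟨u, v, γ, rfl, js, hlen, hks⟩ := hw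
  have hsent : sent u (none : Option (NI N)) v = tw (u ++ v) := by
    simp [sent, tw, optN]
  rw [hsent] at hks
  have hlenpos : ∀ i, i < ws.length → 0 < lenB ws i := by
    intro i hi
    have hget : ws.getD i [] = ws[i] := List.getD_eq_getElem ws [] hi
    rw [lenB, hget]
    exact List.length_pos_iff.mpr (hb _ (List.getElem_mem hi))
  have hGood0 : Good ws [Sum.inl (((s, 0), X, (x, 0)) : NI N)] := by
    constructor
    · simp
    · intro c hc
      simp only [List.mem_singleton] at hc
      subst hc
      refine ⟨⟨⟨lt_of_le_of_lt hsx hx, ?_⟩, ⟨hx, ?_⟩, hsx⟩, hsx⟩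
      · exact hlenpos s (lt_of_le_of_lt hsx hx)
      · exact hlenpos x hx
  have hGood := ksGood h2NF hks hGood0
  obtain ⟨hpw, hall⟩ := hGood
  have hsorted : (u ++ v).Pairwise (· ≤ ·) := by
    rw [tw] at hpw
    exact (List.pairwise_map.mp hpw).imp (fun h => h)
  have hbound : ∀ c ∈ u ++ v, c ∈ List.range ws.length := by
    intro c hc
    rw [List.mem_range]
    exact (hall (Sum.inr c) (by rw [tw]; exact List.mem_map_of_mem hc)).1
  exact mem_letterLang_of_sorted (List.range ws.length)
    (List.pairwise_lt_range (n := ws.length)) (u ++ v) hsorted hbound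

end Paper
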